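/- Let f be a Boolean network on n+1 variables whose last component does not depend on the last coordinate, and let g be the reduction of f obtained by eliminating the last variable. If a vertex i has a self loop in the wiring diagram of g (i.e., component i of g depends on coordinate i), then there is a feedback loop at Fin.castSucc i in the wiring diagram of f (i.e., Relation.TransGen E_f (Fin.castSucc i) (Fin.castSucc i), where E_f j k ↔ component k of f depends on coordinate j). -/

import Mathlib

/-- Component `i` of `f` depends on coordinate `j`. -/
def BoolNetDependsOn {m : ℕ} (f : (Fin m → Bool) → (Fin m → Bool)) (i j : Fin m) : Prop :=
  ∃ (x : Fin m → Bool) (b : Bool), f (Function.update x j b) i ≠ f x i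

/-- A self loop at `i` in the wiring diagram of the reduction `g`
yields a feedback loop at `Fin.castSucc i` in the wiring diagram of `f`. -/
theorem self_loop_of_reduction (n : ℕ)
    (f : (Fin (n+1) → Bool) → (Fin (n+1) → Bool))
    (hf : ∀ (x : Fin (n+1) → Bool) (b : Bool),
      f (Function.update x (Fin.last n) b) (Fin.last n) = f x (Fin.last n))
    (g : (Fin n → Bool) → (Fin n → Bool))
    (hg : ∀ (y : Fin n → Bool) (i : Fin n),
      g y i = f (Fin.snoc y (f (Fin.snoc y false) (Fin.last n))) (Fin.castSucc i))
    (i : Fin n)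
    (h : BoolNetDependsOn g i i) :
    Relation.TransGen (fun a b : Fin (n+1) => BoolNetDependsOn f b a)
      (Fin.castSucc i) (Fin.castSucc i) := by
  obtain ⟨y, b, hy⟩ := h
  rw [hg, hg] at hy
  set y' : Fin n → Bool := Function.update y i b with hy'
  set c : Bool := f (Fin.snoc y false) (Fin.last n) with hc
  set c' : Bool := f (Fin.snoc y' false) (Fin.last n) with hc'
  -- hy : f (snoc y' c') (castSucc i) ≠ f (snoc y c) (castSucc i)
  have hsnoc : ∀ d : Bool, (Fin.snoc y' d : Fin (n+1) → Bool) =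
      Function.update (Fin.snoc y d : Fin (n+1) → Bool) (Fin.castSucc i) b := by
    intro d
    funext j
    induction j using Fin.lastCases with
    | last => simp [Function.update_of_ne (Fin.castSucc_lt_last i).ne']
    | cast k =>
      rcases eq_or_ne k i with rfl | hk
      · simp [hy']
      · have : (Fin.castSucc k) ≠ (Fin.castSucc i) := by
          simpa using hk
        simp [Function.update_of_ne this, hy', Function.update_of_ne hk]
  by_cases hFeq : c' = c
  · apply Relation.TransGen.single
    refine ⟨Fin.snoc y c, b, ?_⟩
    rw [← hsnoc]
    rw [hFeq] at hy
    exact hy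
  · have h1 : BoolNetDependsOn f (Fin.last n) (Fin.castSucc i) := by
      refine ⟨Fin.snoc y false, b, ?_⟩
      rw [← hsnoc]
      exact hFeq
    by_cases hmid : f (Fin.snoc y' c) (Fin.castSucc i) = f (Fin.snoc y c) (Fin.castSucc i)
    · have h2 : BoolNetDependsOn f (Fin.castSucc i) (Fin.last n) := by
        refine ⟨Fin.snoc y' c, c', ?_⟩
        have he : Function.update (Fin.snoc y' c : Fin (n+1) → Bool) (Fin.last n) c' =
            Fin.snoc y' c' := by
          funext j
          induction j using Fin.lastCases with
          | last => simp
          | cast k => simp [Function.update_of_ne (Fin.castSucc_lt_last k).ne]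
        rw [he, hmid]
        exact hy
      exact Relation.TransGen.head h1 (Relation.TransGen.single h2)
    · apply Relation.TransGen.single
      refine ⟨Fin.snoc y c, b, ?_⟩
      rw [← hsnoc]
      exact hmid
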